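/- arXiv:2508.20833 — 4 statements merged into one kernel-verified Lean document; each statement's English description precedes it below -/
import Mathlib

section
/- The determinant of the Jacobian of the composite map u ↦ (p_1, …, p_{d-1}), where φ_j = σ(u_j) = e^{u_j}/(1+e^{u_j}) and p_j = φ_j ∏_{i<j}(1-φ_i), equals ∏_{i=1}^{d} p_i, where p_d = ∏_{i=1}^{d-1}(1-φ_i). -/
open Finset

private lemma logit_aux (n : ℕ)
    (σ : ℝ → ℝ) (hσ : ∀ t, σ t = Real.exp t / (1 + Real.exp t))
    (u : Fin n → ℝ)
    (G : (Fin n → ℝ) → Fin n → ℝ)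
    (hG : ∀ v (j : Fin n), G v j =
      σ (v j) * ∏ i ∈ Finset.univ.filter (fun i : Fin n => (i : ℕ) < (j : ℕ)), (1 - σ (v i)))
    (p : Fin (n + 1) → ℝ)
    (hp : ∀ k : Fin (n + 1), p k =
      if h : (k : ℕ) < n then G u ⟨k, h⟩ else ∏ i : Fin n, (1 - σ (u i))) :
    Matrix.det (Matrix.of fun i j : Fin n =>
        fderiv ℝ G u (Pi.single j (1 : ℝ) : Fin n → ℝ) i) = ∏ k : Fin (n + 1), p k := by
  classical
  have hσ' : σ = fun t => Real.exp t / (1 + Real.exp t) := funext hσ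
  subst hσ'
  set s : ℝ → ℝ := fun t => Real.exp t / (1 + Real.exp t) with hs_def
  have hs : ∀ t, HasDerivAt s (s t * (1 - s t)) t := by
    intro t
    have hpos : (0 : ℝ) < 1 + Real.exp t := by positivity
    have hne : (1 + Real.exp t) ≠ 0 := ne_of_gt hpos
    have h : HasDerivAt (fun x => Real.exp x / (1 + Real.exp x))
        ((Real.exp t * (1 + Real.exp t) - Real.exp t * (0 + Real.exp t)) / (1 + Real.exp t) ^ 2) t := by
      have := (Real.hasDerivAt_exp t).div ((hasDerivAt_const t (1 : ℝ)).add
        (Real.hasDerivAt_exp t)) hne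
      exact this
    convert h using 1
    simp only [hs_def]
    field_simp
    ring
  set c : Fin n → Fin n → ℝ → ℝ := fun j i t =>
    if i = j then s t else if (i : ℕ) < (j : ℕ) then 1 - s t else 1 with hc_def
  set c' : Fin n → Fin n → ℝ → ℝ := fun j i t =>
    if i = j then s t * (1 - s t) else if (i : ℕ) < (j : ℕ) then -(s t * (1 - s t)) else 0
    with hc'_def
  have hcd : ∀ j i t, HasDerivAt (c j i) (c' j i t) t := by
    intro j i t
    by_cases h1 : i = j
    · simpa [hc_def, hc'_def, h1] using hs t
    · by_cases h2 : i < j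
      · simpa [hc_def, hc'_def, h1, h2] using (hs t).const_sub (1 : ℝ)
      · simpa [hc_def, hc'_def, h1, h2] using hasDerivAt_const t (1 : ℝ)
  have hprod : ∀ (v : Fin n → ℝ) (j : Fin n), G v j = ∏ i, c j i (v i) := by
    intro v j
    rw [hG v j, ← Finset.mul_prod_erase univ (fun i => c j i (v i)) (mem_univ j)]
    congr 1
    · simp [hc_def]
    · rw [Finset.prod_filter,
        ← Finset.prod_erase (univ : Finset (Fin n))
          (f := fun i => if (i : ℕ) < (j : ℕ) then 1 - s (v i) else 1) (a := j) (by simp)]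
      exact Finset.prod_congr rfl fun i hi => by
        simp [hc_def, (Finset.mem_erase.mp hi).1]
  set L : Fin n → (Fin n → ℝ) →L[ℝ] ℝ := fun j =>
    ∑ i, (∏ m ∈ univ.erase i, c j m (u m)) •
      ((c' j i (u i)) • (ContinuousLinearMap.proj i : (Fin n → ℝ) →L[ℝ] ℝ)) with hL_def
  have hGd : HasFDerivAt G (ContinuousLinearMap.pi L) u := by
    apply hasFDerivAt_pi.mpr
    intro j
    have h1 : HasFDerivAt (fun v : Fin n → ℝ => ∏ i, c j i (v i)) (L j) u :=
      HasFDerivAt.finset_prod (fun i _ =>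
        by have := (hcd j i (u i)).comp_hasFDerivAt (f := fun v : Fin n → ℝ => v i) u (hasFDerivAt_apply (𝕜 := ℝ) (F' := fun _ => ℝ) i u); exact this)
    have h2 : (fun v : Fin n → ℝ => G v j) = fun v => ∏ i, c j i (v i) :=
      funext fun v => hprod v j
    rw [h2]
    exact h1
  have hfd : fderiv ℝ G u = ContinuousLinearMap.pi L := hGd.fderiv
  have hM : ∀ j k : Fin n, fderiv ℝ G u (Pi.single k (1 : ℝ)) j =
      (∏ m ∈ univ.erase k, c j m (u m)) * c' j k (u k) := by
    intro j k
    rw [hfd]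
    simp only [ContinuousLinearMap.pi_apply, hL_def, ContinuousLinearMap.coe_sum',
      Finset.sum_apply, ContinuousLinearMap.coe_smul', Pi.smul_apply,
      ContinuousLinearMap.proj_apply, smul_eq_mul]
    rw [Finset.sum_eq_single k]
    · simp
    · intro i _ hik
      simp [Pi.single_apply, hik]
    · simp
  rw [Matrix.det_of_lowerTriangular _ (by
    intro j k hjk
    have hlt : j < k := hjk
    have hne : k ≠ j := hlt.ne'
    have hnlt : ¬ k < j := not_lt.mpr hlt.le
    simp only [Matrix.of_apply]
    rw [hM j k]
    have : c' j k (u k) = 0 := by simp [hc'_def, hne, hnlt]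
    rw [this, mul_zero])]
  have hdiag : ∀ j : Fin n, (Matrix.of fun i j : Fin n =>
      fderiv ℝ G u (Pi.single j (1 : ℝ)) i) j j = G u j * (1 - s (u j)) := by
    intro j
    simp only [Matrix.of_apply]
    rw [hM j j, hprod u j, ← Finset.mul_prod_erase univ (fun i => c j i (u i)) (mem_univ j)]
    have hc'jj : c' j j (u j) = s (u j) * (1 - s (u j)) := by simp [hc'_def]
    have hcjj : c j j (u j) = s (u j) := by simp [hc_def]
    rw [hc'jj, hcjj]
    ring
  rw [Finset.prod_congr rfl fun j _ => hdiag j]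
  rw [Fin.prod_univ_castSucc (f := p), Finset.prod_mul_distrib]
  congr 1
  · apply Finset.prod_congr rfl
    intro j _
    have hj : ((Fin.castSucc j : Fin (n + 1)) : ℕ) < n := by simpa using j.isLt
    rw [hp, dif_pos hj]
    rfl
  · rw [hp]
    have hl : ¬ ((Fin.last n : Fin (n + 1)) : ℕ) < n := by simp
    rw [dif_neg hl]

/-- The Jacobian determinant of the logit stick-breaking parametrization
u ↦ (p_1,…,p_{d-1}) equals ∏_{i=1}^d p_i. -/
theorem logit_stick_breaking_jacobian_det (d : ℕ) (hd : 2 ≤ d)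
    (σ : ℝ → ℝ) (hσ : ∀ t, σ t = Real.exp t / (1 + Real.exp t))
    (u : Fin (d - 1) → ℝ)
    (G : (Fin (d - 1) → ℝ) → Fin (d - 1) → ℝ)
    (hG : ∀ v (j : Fin (d - 1)), G v j =
      σ (v j) * ∏ i ∈ Finset.univ.filter (fun i : Fin (d - 1) => (i : ℕ) < (j : ℕ)), (1 - σ (v i)))
    (p : Fin d → ℝ)
    (hp : ∀ k : Fin d, p k =
      if h : (k : ℕ) < d - 1 then G u ⟨k, h⟩ else ∏ i : Fin (d - 1), (1 - σ (u i))) :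
    Matrix.det (Matrix.of fun i j : Fin (d - 1) =>
        fderiv ℝ G u (Pi.single j (1 : ℝ) : Fin (d - 1) → ℝ) i) = ∏ k : Fin d, p k := by
  obtain ⟨n, rfl⟩ : ∃ n, d = n + 1 := ⟨d - 1, by omega⟩
  exact logit_aux n σ hσ u G hG p hp
end

section
/- The function f̂(u) = Σ_{i=1}^d β_i log(p_i(u)) on ℝ^{d-1} (with p the logit stick-breaking parametrization of the simplex) has gradient that is Lipschitz with constant (1/4) Σ_{i=1}^d |β_i|. -/
open Finset

/-- The gradient of f̂(u) = Σ_i β_i log p_i(u) (logit stick-breaking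
parametrization) is Lipschitz with constant (1/4) Σ_i |β_i|. -/
theorem fhat_gradient_lipschitz (d : ℕ) (hd : 2 ≤ d) (β : Fin d → ℝ)
    (σ : ℝ → ℝ) (hσ : ∀ t, σ t = Real.exp t / (1 + Real.exp t))
    (p : EuclideanSpace ℝ (Fin (d - 1)) → Fin d → ℝ)
    (hp : ∀ v (k : Fin d), p v k =
      if h : (k : ℕ) < d - 1 then
        σ (v ⟨k, h⟩) *
          ∏ i ∈ Finset.univ.filter (fun i : Fin (d - 1) => (i : ℕ) < (k : ℕ)), (1 - σ (v i))
      else ∏ i : Fin (d - 1), (1 - σ (v i)))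
    (fhat : EuclideanSpace ℝ (Fin (d - 1)) → ℝ)
    (hfhat : ∀ v, fhat v = ∑ i : Fin d, β i * Real.log (p v i)) :
    ∀ x y, ‖gradient fhat x - gradient fhat y‖ ≤
      (1 / 4 * ∑ i : Fin d, |β i|) * ‖x - y‖ := by
  intro x y
  -- Basic facts about the sigmoid
  have hexp : ∀ t : ℝ, (0:ℝ) < 1 + Real.exp t := fun t => by positivity
  have hσpos : ∀ t, 0 < σ t := fun t => by rw [hσ]; positivity
  have h1σ : ∀ t, 1 - σ t = (1 + Real.exp t)⁻¹ := fun t => by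
    rw [hσ]; field_simp; ring
  have h1σpos : ∀ t, 0 < 1 - σ t := fun t => by rw [h1σ]; positivity
  have hlogσ : ∀ t, Real.log (σ t) = t - Real.log (1 + Real.exp t) := fun t => by
    rw [hσ, Real.log_div (Real.exp_ne_zero t) (hexp t).ne', Real.log_exp]
  have hlog1σ : ∀ t, Real.log (1 - σ t) = -Real.log (1 + Real.exp t) := fun t => by
    rw [h1σ, Real.log_inv]
  -- The sigmoid is (1/4)-Lipschitz
  have hder : ∀ t : ℝ, HasDerivAt σ (Real.exp t / (1 + Real.exp t) ^ 2) t := by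
    intro t
    have h := (Real.hasDerivAt_exp t).div ((Real.hasDerivAt_exp t).const_add 1) (hexp t).ne'
    have hfun : (Real.exp / fun t => 1 + Real.exp t) = σ := funext fun t => (hσ t).symm
    rw [hfun] at h
    refine h.congr_deriv ?_
    congr 1
    ring
  have hlip : ∀ a b : ℝ, |σ a - σ b| ≤ 1 / 4 * |a - b| := by
    intro a b
    have := Convex.norm_image_sub_le_of_norm_hasDerivWithin_le
      (f := σ) (f' := fun t => Real.exp t / (1 + Real.exp t) ^ 2) (C := 1/4) (s := Set.univ)
      (fun t _ => (hder t).hasDerivWithinAt) (fun t _ => by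
        rw [Real.norm_eq_abs, abs_of_nonneg (by positivity), div_le_iff₀ (by positivity)]
        nlinarith [sq_nonneg (1 - Real.exp t), Real.exp_pos t])
      convex_univ (Set.mem_univ b) (Set.mem_univ a)
    simpa [Real.norm_eq_abs] using this
  -- the "tail" coefficients
  set c : Fin (d-1) → ℝ :=
    fun j => ∑ k ∈ univ.filter (fun k : Fin d => (j:ℕ) ≤ (k:ℕ)), β k with hc
  -- Separable form of fhat
  have hfhat' : ∀ v, fhat v = ∑ j : Fin (d-1),
      (β ⟨j, lt_of_lt_of_le j.2 (Nat.sub_le d 1)⟩ * v j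
        - c j * Real.log (1 + Real.exp (v j))) := by
    intro v
    set w : Fin (d-1) → ℝ := fun i => Real.log (1 + Real.exp (v i)) with hw
    have hlogp : ∀ k : Fin d, Real.log (p v k) =
        (if h : (k:ℕ) < d - 1 then v ⟨k, h⟩ else 0)
          - ∑ i ∈ univ.filter (fun i : Fin (d-1) => (i:ℕ) ≤ (k:ℕ)), w i := by
      intro k
      rw [hp v k]
      by_cases h : (k:ℕ) < d - 1
      · rw [dif_pos h, dif_pos h]
        rw [Real.log_mul (hσpos _).ne' (Finset.prod_ne_zero_iff.2 fun i _ => (h1σpos _).ne'),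
          Real.log_prod (fun i _ => (h1σpos _).ne')]
        have hins : univ.filter (fun i : Fin (d-1) => (i:ℕ) ≤ (k:ℕ))
            = insert (⟨k, h⟩ : Fin (d-1)) (univ.filter (fun i : Fin (d-1) => (i:ℕ) < (k:ℕ))) := by
          ext i
          simp only [mem_filter, mem_univ, true_and, mem_insert, Fin.ext_iff]
          omega
        rw [hins, Finset.sum_insert (by simp)]
        simp only [hlogσ, hlog1σ]
        simp [hw]
        ring
      · rw [dif_neg h, dif_neg h]
        rw [Real.log_prod (fun i _ => (h1σpos _).ne')]
        have huniv : univ.filter (fun i : Fin (d-1) => (i:ℕ) ≤ (k:ℕ)) = univ := by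
          apply Finset.filter_true_of_mem
          intro i _
          omega
        rw [huniv]
        simp only [hlog1σ]
        simp [hw]
    rw [hfhat]
    simp only [hlogp, mul_sub]
    rw [Finset.sum_sub_distrib, Finset.sum_sub_distrib]
    congr 1
    · have key : ∀ f : ℕ → ℝ, (∀ n, d - 1 ≤ n → f n = 0) →
          (∑ k : Fin d, f k = ∑ j : Fin (d-1), f j) := by
        intro f hf
        rw [Fin.sum_univ_eq_sum_range (fun n => f n) d,
          Fin.sum_univ_eq_sum_range (fun n => f n) (d-1)]
        exact (Finset.sum_subset (Finset.range_subset_range.2 (Nat.sub_le d 1))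
          (fun n _ hn' => hf n (by simpa using hn'))).symm
      have h2 := key (fun n => if h : n < d - 1 then
          β ⟨n, lt_of_lt_of_le h (Nat.sub_le d 1)⟩ * v ⟨n, h⟩ else 0)
        (fun n hn => dif_neg (by omega))
      refine Eq.trans ?_ (h2.trans ?_)
      · refine Finset.sum_congr rfl fun k _ => ?_
        by_cases h : (k:ℕ) < d - 1
        · simp only [dif_pos h, Fin.eta]
        · simp only [dif_neg h, mul_zero]
      · refine Finset.sum_congr rfl fun j _ => ?_
        simp only [dif_pos j.isLt, Fin.eta]
    · simp only [Finset.mul_sum]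
      rw [Finset.sum_comm' (s := univ)
        (t := fun k : Fin d => univ.filter (fun i : Fin (d-1) => (i:ℕ) ≤ (k:ℕ)))
        (t' := univ)
        (s' := fun i : Fin (d-1) => univ.filter (fun k : Fin d => (i:ℕ) ≤ (k:ℕ)))
        (f := fun k i => β k * w i) (by intro k i; simp)]
      simp [hw, hc, Finset.sum_mul]
  -- The gradient of fhat
  have hgrad : ∀ v, gradient fhat v = (WithLp.equiv 2 (Fin (d-1) → ℝ)).symm
      (fun j => β ⟨j, lt_of_lt_of_le j.2 (Nat.sub_le d 1)⟩ - c j * σ (v j)) := by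
    intro v
    apply HasGradientAt.gradient
    have hfun : fhat = fun u : EuclideanSpace ℝ (Fin (d-1)) => ∑ j : Fin (d-1),
        (β ⟨j, lt_of_lt_of_le j.2 (Nat.sub_le d 1)⟩ * u j
          - c j * Real.log (1 + Real.exp (u j))) := funext hfhat'
    rw [hfun, hasGradientAt_iff_hasFDerivAt]
    have hderiv : ∀ j : Fin (d-1), HasDerivAt (fun t =>
        β ⟨j, lt_of_lt_of_le j.2 (Nat.sub_le d 1)⟩ * t - c j * Real.log (1 + Real.exp t))
        (β ⟨j, lt_of_lt_of_le j.2 (Nat.sub_le d 1)⟩ - c j * σ (v j)) (v j) := by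
      intro j
      have h1 : HasDerivAt (fun t : ℝ => β ⟨j, lt_of_lt_of_le j.2 (Nat.sub_le d 1)⟩ * t)
          (β ⟨j, lt_of_lt_of_le j.2 (Nat.sub_le d 1)⟩) (v j) := by
        simpa using (hasDerivAt_id (v j)).const_mul (β ⟨j, lt_of_lt_of_le j.2 (Nat.sub_le d 1)⟩)
      have h2 : HasDerivAt (fun t : ℝ => Real.log (1 + Real.exp t))
          (Real.exp (v j) / (1 + Real.exp (v j))) (v j) := by
        simpa using (((Real.hasDerivAt_exp (v j)).const_add 1).log (hexp (v j)).ne')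
      have := h1.sub ((h2.const_mul (c j)))
      simp only [hσ]; exact this
    have hterm : ∀ j : Fin (d-1), HasFDerivAt
        (fun u : EuclideanSpace ℝ (Fin (d-1)) =>
          β ⟨j, lt_of_lt_of_le j.2 (Nat.sub_le d 1)⟩ * u j - c j * Real.log (1 + Real.exp (u j)))
        ((β ⟨j, lt_of_lt_of_le j.2 (Nat.sub_le d 1)⟩ - c j * σ (v j)) •
          (EuclideanSpace.proj j : EuclideanSpace ℝ (Fin (d-1)) →L[ℝ] ℝ)) v := by
      intro j
      have hproj : HasFDerivAt (fun u : EuclideanSpace ℝ (Fin (d-1)) => u j)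
          (EuclideanSpace.proj j : EuclideanSpace ℝ (Fin (d-1)) →L[ℝ] ℝ) v :=
        (EuclideanSpace.proj j : EuclideanSpace ℝ (Fin (d-1)) →L[ℝ] ℝ).hasFDerivAt
      exact (hderiv j).comp_hasFDerivAt v hproj
    have hsum := HasFDerivAt.fun_sum (fun j (_ : j ∈ (univ : Finset (Fin (d-1)))) => hterm j)
    refine hsum.congr_fderiv ?_
    apply ContinuousLinearMap.ext
    intro u
    simp [InnerProductSpace.toDual_apply_apply, PiLp.inner_apply, RCLike.inner_apply,
      ContinuousLinearMap.sum_apply, mul_comm]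
  -- coefficient bound
  have hS : (0:ℝ) ≤ ∑ i : Fin d, |β i| := Finset.sum_nonneg fun i _ => abs_nonneg _
  have hcb : ∀ j : Fin (d-1), |c j| ≤ ∑ i : Fin d, |β i| := by
    intro j
    calc |c j| ≤ ∑ k ∈ univ.filter (fun k : Fin d => (j:ℕ) ≤ (k:ℕ)), |β k| :=
          Finset.abs_sum_le_sum_abs _ _
      _ ≤ ∑ i : Fin d, |β i| :=
          Finset.sum_le_sum_of_subset_of_nonneg (Finset.filter_subset _ _)
            (fun i _ _ => abs_nonneg _)
  -- Final norm estimate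
  rw [hgrad x, hgrad y]
  set S : ℝ := ∑ i : Fin d, |β i| with hSdef
  set a : Fin (d-1) → ℝ := fun j => β ⟨j, lt_of_lt_of_le j.2 (Nat.sub_le d 1)⟩ with ha
  rw [EuclideanSpace.norm_eq, EuclideanSpace.norm_eq]
  have hK : (0:ℝ) ≤ 1 / 4 * S := by positivity
  have key : ∀ j : Fin (d-1),
      ‖((WithLp.equiv 2 (Fin (d-1) → ℝ)).symm (fun j => a j - c j * σ (x j))
        - (WithLp.equiv 2 (Fin (d-1) → ℝ)).symm (fun j => a j - c j * σ (y j))) j‖ ^ 2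
      ≤ (1 / 4 * S) ^ 2 * ‖(x - y) j‖ ^ 2 := by
    intro j
    simp only [PiLp.sub_apply, WithLp.equiv_symm_apply, PiLp.toLp_apply, Real.norm_eq_abs, sq_abs]
    have h1 : |(a j - c j * σ (x j)) - (a j - c j * σ (y j))| ≤ (1 / 4 * S) * |x j - y j| := by
      have heq : (a j - c j * σ (x j)) - (a j - c j * σ (y j)) = c j * (σ (y j) - σ (x j)) := by
        ring
      rw [heq, abs_mul]
      calc |c j| * |σ (y j) - σ (x j)| ≤ S * (1 / 4 * |y j - x j|) :=
            mul_le_mul (hcb j) (hlip _ _) (abs_nonneg _) hS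
        _ = (1 / 4 * S) * |x j - y j| := by rw [abs_sub_comm]; ring
    have h2 := mul_self_le_mul_self (abs_nonneg _) h1
    calc ((a j - c j * σ (x j)) - (a j - c j * σ (y j))) ^ 2
        = |(a j - c j * σ (x j)) - (a j - c j * σ (y j))| ^ 2 := (sq_abs _).symm
      _ ≤ ((1 / 4 * S) * |x j - y j|) ^ 2 := by
          rw [sq, sq]; exact h2
      _ = (1 / 4 * S) ^ 2 * (x j - y j) ^ 2 := by
          rw [mul_pow, sq_abs]
  calc Real.sqrt (∑ j, ‖((WithLp.equiv 2 (Fin (d-1) → ℝ)).symm (fun j => a j - c j * σ (x j))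
        - (WithLp.equiv 2 (Fin (d-1) → ℝ)).symm (fun j => a j - c j * σ (y j))) j‖ ^ 2)
      ≤ Real.sqrt (∑ j, (1 / 4 * S) ^ 2 * ‖(x - y) j‖ ^ 2) :=
        Real.sqrt_le_sqrt (Finset.sum_le_sum fun j _ => key j)
    _ = (1 / 4 * S) * Real.sqrt (∑ j, ‖(x - y) j‖ ^ 2) := by
        rw [← Finset.mul_sum, Real.sqrt_mul (by positivity), Real.sqrt_sq hK]
end

section
/- The function f̂(u) = Σ_{i=1}^d β_i log(p_i(u)) (logit stick-breaking parametrization) is not strongly convex: for every α > 0 and every nonzero δ ∈ ℝ^{d-1}, there exists u ∈ ℝ^{d-1} such that ⟨δ, ∇f̂(u) − ∇f̂(u−δ)⟩ < α‖δ‖². -/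
open Finset RealInnerProductSpace NNReal

noncomputable def Gfun : ℝ → ℝ := fun t => Real.log (1 + Real.exp t)

lemma one_add_exp_pos (t : ℝ) : 0 < 1 + Real.exp t := by positivity

lemma hasDerivAt_Gfun (t : ℝ) :
    HasDerivAt Gfun (Real.exp t / (1 + Real.exp t)) t := by
  have h := ((Real.hasDerivAt_exp t).const_add 1).log (one_add_exp_pos t).ne'
  unfold Gfun
  simpa using h

lemma lip_Gfun : LipschitzWith 1 Gfun := by
  apply lipschitzWith_of_nnnorm_deriv_le (fun x => (hasDerivAt_Gfun x).differentiableAt)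
  intro x
  rw [(hasDerivAt_Gfun x).deriv, ← NNReal.coe_le_coe]
  push_cast
  rw [Real.norm_eq_abs, abs_of_nonneg (by positivity)]
  rw [div_le_one (one_add_exp_pos x)]
  linarith [Real.exp_pos x]

lemma hasDerivAt_idG (t : ℝ) :
    HasDerivAt (fun t => t - Gfun t) (1 - Real.exp t / (1 + Real.exp t)) t :=
  (hasDerivAt_id t).sub (hasDerivAt_Gfun t)

lemma lip_id_sub_Gfun : LipschitzWith 1 (fun t => t - Gfun t) := by
  apply lipschitzWith_of_nnnorm_deriv_le (fun x => (hasDerivAt_idG x).differentiableAt)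
  intro x
  rw [(hasDerivAt_idG x).deriv, ← NNReal.coe_le_coe]
  push_cast
  rw [Real.norm_eq_abs]
  have h1 : Real.exp x / (1 + Real.exp x) ≤ 1 := by
    rw [div_le_one (one_add_exp_pos x)]; linarith [Real.exp_pos x]
  have h2 : 0 ≤ Real.exp x / (1 + Real.exp x) := by positivity
  rw [abs_of_nonneg (by linarith)]
  linarith

lemma lip_const_mul {E : Type*} [PseudoEMetricSpace E] (c : ℝ) {K : ℝ≥0} {f : E → ℝ}
    (hf : LipschitzWith K f) : LipschitzWith (‖c‖₊ * K) (fun x => c * f x) := by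
  intro x y
  calc edist (c * f x) (c * f y) = ‖c‖₊ * edist (f x) (f y) := by
        simp [edist_nndist, nndist_eq_nnnorm, ← mul_sub, nnnorm_mul, ENNReal.coe_mul]
    _ ≤ ‖c‖₊ * (K * edist x y) := mul_le_mul_right (hf x y) _
    _ = ↑(‖c‖₊ * K) * edist x y := by rw [ENNReal.coe_mul, mul_assoc]

lemma lip_sum {ι E : Type*} [PseudoEMetricSpace E] (s : Finset ι)
    (f : ι → E → ℝ) (K : ι → ℝ≥0) (h : ∀ i ∈ s, LipschitzWith (K i) (f i)) :
    LipschitzWith (∑ i ∈ s, K i) (fun x => ∑ i ∈ s, f i x) := by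
  induction s using Finset.cons_induction with
  | empty => simpa using LipschitzWith.const' (0 : ℝ)
  | cons a s ha ih =>
    simp only [Finset.sum_cons]
    exact (h a (Finset.mem_cons_self a s)).add
      (ih (fun i hi => h i (Finset.mem_cons_of_mem hi)))

lemma lip_eval {n : ℕ} (j : Fin n) :
    LipschitzWith 1 (fun v : EuclideanSpace ℝ (Fin n) => v j) := by
  have h1 := PiLp.lipschitzWith_ofLp 2 (fun _ : Fin n => ℝ)
  have h2 := LipschitzWith.eval (α := fun _ : Fin n => ℝ) j
  have h3 := h2.comp h1
  rw [mul_one] at h3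
  exact h3
/-- f̂ is not strongly convex: for every α > 0 and nonzero δ there is u with
⟨δ, ∇f̂(u) − ∇f̂(u−δ)⟩ < α‖δ‖². -/
theorem fhat_not_strongly_convex (d : ℕ) (hd : 2 ≤ d) (β : Fin d → ℝ)
    (σ : ℝ → ℝ) (hσ : ∀ t, σ t = Real.exp t / (1 + Real.exp t))
    (p : EuclideanSpace ℝ (Fin (d - 1)) → Fin d → ℝ)
    (hp : ∀ v (k : Fin d), p v k =
      if h : (k : ℕ) < d - 1 then
        σ (v ⟨k, h⟩) *
          ∏ i ∈ Finset.univ.filter (fun i : Fin (d - 1) => (i : ℕ) < (k : ℕ)), (1 - σ (v i))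
      else ∏ i : Fin (d - 1), (1 - σ (v i)))
    (fhat : EuclideanSpace ℝ (Fin (d - 1)) → ℝ)
    (hfhat : ∀ v, fhat v = ∑ i : Fin d, β i * Real.log (p v i))
    (α : ℝ) (hα : 0 < α) (δ : EuclideanSpace ℝ (Fin (d - 1))) (hδ : δ ≠ 0) :
    ∃ u : EuclideanSpace ℝ (Fin (d - 1)),
      ⟪δ, gradient fhat u - gradient fhat (u - δ)⟫ < α * ‖δ‖ ^ 2 := by
  -- basic facts on σ
  have hσpos : ∀ t, 0 < σ t := by
    intro t; rw [hσ]; positivity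
  have hσlt : ∀ t, 1 - σ t = 1 / (1 + Real.exp t) := by
    intro t; rw [hσ]; field_simp; ring
  have hσlt_pos : ∀ t, 0 < 1 - σ t := by
    intro t; rw [hσlt]; positivity
  have hlogσ : ∀ t, Real.log (σ t) = t - Gfun t := by
    intro t
    rw [hσ, Real.log_div (Real.exp_pos t).ne' (one_add_exp_pos t).ne', Real.log_exp, Gfun]
  have hlog1σ : ∀ t, Real.log (1 - σ t) = -Gfun t := by
    intro t
    rw [hσlt, one_div, Real.log_inv, Gfun]
  -- each log (p v k) is Lipschitz
  have hφ : ∀ k : Fin d, ∃ K : ℝ≥0, LipschitzWith K (fun v => Real.log (p v k)) := by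
    intro k
    by_cases h : (k : ℕ) < d - 1
    · set S := Finset.univ.filter (fun i : Fin (d - 1) => (i : ℕ) < (k : ℕ)) with hS
      set j : Fin (d - 1) := ⟨k, h⟩ with hj
      have hfun : (fun v : EuclideanSpace ℝ (Fin (d - 1)) => Real.log (p v k)) =
          fun v => (v j - Gfun (v j)) + ∑ i ∈ S, -(Gfun (v i)) := by
        funext v
        have hprodpos : 0 < ∏ i ∈ S, (1 - σ (v i)) :=
          Finset.prod_pos (fun i _ => hσlt_pos (v i))
        rw [hp v k, dif_pos h, Real.log_mul (hσpos _).ne' hprodpos.ne',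
          Real.log_prod (fun i _ => (hσlt_pos (v i)).ne'), hlogσ]
        congr 1
        exact Finset.sum_congr rfl (fun i _ => hlog1σ (v i))
      rw [hfun]
      exact ⟨1 * 1 + ∑ _i ∈ S, 1,
        (lip_id_sub_Gfun.comp (lip_eval j)).add
          (lip_sum S _ (fun _ => 1) (fun i _ => by simpa only [Function.comp_def, Pi.neg_def, Pi.neg_apply, one_mul] using ((lip_Gfun.comp (lip_eval i)).neg)))⟩
    · have hfun : (fun v : EuclideanSpace ℝ (Fin (d - 1)) => Real.log (p v k)) =
          fun v => ∑ i : Fin (d - 1), -(Gfun (v i)) := by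
        funext v
        rw [hp v k, dif_neg h, Real.log_prod (fun i _ => (hσlt_pos (v i)).ne')]
        exact Finset.sum_congr rfl (fun i _ => hlog1σ (v i))
      rw [hfun]
      exact ⟨∑ _i : Fin (d - 1), 1,
        lip_sum Finset.univ _ (fun _ => 1) (fun i _ => by simpa only [Function.comp_def, Pi.neg_def, Pi.neg_apply, one_mul] using ((lip_Gfun.comp (lip_eval i)).neg))⟩
  choose Kφ hKφ using hφ
  -- fhat is Lipschitz
  have hfhat' : fhat = fun v => ∑ k : Fin d, β k * Real.log (p v k) := funext hfhat
  have hlipf : LipschitzWith (∑ k : Fin d, ‖β k‖₊ * Kφ k) fhat := by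
    rw [hfhat']
    exact lip_sum Finset.univ (fun k v => β k * Real.log (p v k)) _
      (fun k _ => lip_const_mul (β k) (hKφ k))
  set K : ℝ≥0 := ∑ k : Fin d, ‖β k‖₊ * Kφ k
  -- bound on the gradient
  have hgrad : ∀ x, ‖gradient fhat x‖ ≤ (K : ℝ) := by
    intro x
    have : ‖gradient fhat x‖ = ‖fderiv ℝ fhat x‖ := by
      show ‖(InnerProductSpace.toDual ℝ _).symm (fderiv ℝ fhat x)‖ = _
      exact LinearIsometryEquiv.norm_map _ _
    rw [this]
    exact norm_fderiv_le_of_lipschitz ℝ hlipf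
  -- conclude by contradiction
  by_contra hcon
  push_neg at hcon
  have hδ2 : 0 < α * ‖δ‖ ^ 2 := by
    have := norm_pos_iff.mpr hδ
    positivity
  set g : ℕ → ℝ := fun n => ⟪δ, gradient fhat (n • δ)⟫ with hg
  have hstep : ∀ n : ℕ, g n + α * ‖δ‖ ^ 2 ≤ g (n + 1) := by
    intro n
    have h1 := hcon ((n + 1) • δ)
    have h2 : (n + 1) • δ - δ = n • δ := by
      rw [succ_nsmul]; abel
    rw [h2, inner_sub_right] at h1
    simp only [hg]
    linarith
  have hge : ∀ n : ℕ, g 0 + n * (α * ‖δ‖ ^ 2) ≤ g n := by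
    intro n
    induction n with
    | zero => simp
    | succ n ih =>
      have := hstep n
      push_cast
      push_cast at ih
      linarith
  have hbound : ∀ n : ℕ, g n ≤ ‖δ‖ * K := by
    intro n
    calc g n ≤ ‖δ‖ * ‖gradient fhat (n • δ)‖ := real_inner_le_norm _ _
      _ ≤ ‖δ‖ * K := by
        exact mul_le_mul_of_nonneg_left (hgrad _) (norm_nonneg _)
  obtain ⟨n, hn⟩ := exists_nat_gt ((‖δ‖ * K - g 0) / (α * ‖δ‖ ^ 2))
  have h1 := hge n
  have h2 := hbound n
  rw [div_lt_iff₀ hδ2] at hn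
  linarith
end

section
/- If the one-dimensional marginal density of u is proportional to e^{a u}/(1+e^u)^{a+b} with a, b > 0, then the second moment satisfies E[u²] ≤ (Γ(a+b)/(Γ(a)Γ(b))) · (2/a³ + 2/b³). -/
open MeasureTheory Set Real

private lemma key_integrable {r : ℝ} (hr : 0 < r) :
    IntegrableOn (fun t : ℝ => t ^ 2 * Real.exp (-(r * t))) (Set.Ioi 0) := by
  have h0 : IntegrableOn (fun x : ℝ => Real.exp (-x) * x ^ ((3:ℝ) - 1)) (Set.Ioi 0) :=
    Real.GammaIntegral_convergent (by norm_num)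
  have h1 : IntegrableOn (fun x : ℝ => Real.exp (-(r * x)) * (r * x) ^ ((3:ℝ) - 1))
      (Set.Ioi 0) := by
    have := (integrableOn_Ioi_comp_mul_left_iff
      (fun x : ℝ => Real.exp (-x) * x ^ ((3:ℝ) - 1)) 0 hr).2 (by simpa using h0)
    simpa using this
  have h2 : IntegrableOn
      (fun x : ℝ => (r ^ 2)⁻¹ * (Real.exp (-(r * x)) * (r * x) ^ ((3:ℝ) - 1)))
      (Set.Ioi 0) := h1.const_mul ((r ^ 2)⁻¹)
  refine h2.congr_fun (fun t _ => ?_) measurableSet_Ioi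
  have e : ∀ x : ℝ, x ^ ((3:ℝ) - 1) = x ^ 2 := by
    intro x
    rw [show ((3:ℝ) - 1) = ((2:ℕ):ℝ) by norm_num, Real.rpow_natCast]
  dsimp only; rw [e]
  have : (r * t) ^ 2 = r ^ 2 * t ^ 2 := by ring
  rw [this]
  field_simp

private lemma key_value {r : ℝ} (hr : 0 < r) :
    ∫ t in Set.Ioi (0:ℝ), t ^ 2 * Real.exp (-(r * t)) = 2 / r ^ 3 := by
  have h2 := Real.integral_rpow_mul_exp_neg_mul_Ioi (a := 3) (r := r) (by norm_num) hr
  have e : ∀ x : ℝ, x ^ ((3:ℝ) - 1) = x ^ 2 := by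
    intro x
    rw [show ((3:ℝ) - 1) = ((2:ℕ):ℝ) by norm_num, Real.rpow_natCast]
  simp_rw [e] at h2
  have hg : Real.Gamma 3 = 2 := by
    rw [show (3:ℝ) = (2:ℕ) + 1 by norm_num, Real.Gamma_nat_eq_factorial]
    norm_num
  have hp : ((1:ℝ) / r) ^ (3:ℝ) = (1 / r) ^ 3 := by
    rw [show (3:ℝ) = ((3:ℕ):ℝ) by norm_num, Real.rpow_natCast]
  rw [h2, hg, hp]
  field_simp

private lemma key_integrable_neg {r : ℝ} (hr : 0 < r) :
    IntegrableOn (fun t : ℝ => t ^ 2 * Real.exp (r * t)) (Set.Iic 0) := by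
  have h := key_integrable hr
  have h1 : IntegrableOn (fun t : ℝ => t ^ 2 * Real.exp (-(r * t))) (Set.Ici 0) :=
    (integrableOn_Ici_iff_integrableOn_Ioi).2 h
  have heq : (Set.Iic (0:ℝ)).indicator (fun t : ℝ => t ^ 2 * Real.exp (r * t)) =
      fun x => (Set.Ici (0:ℝ)).indicator
        (fun t : ℝ => t ^ 2 * Real.exp (-(r * t))) (-x) := by
    funext x
    simp only [Set.indicator_apply, Set.mem_Iic, Set.mem_Ici, neg_nonneg]
    by_cases hx : x ≤ 0
    · rw [if_pos hx, if_pos hx]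
      ring_nf
    · rw [if_neg hx, if_neg hx]
  have h2 := ((integrable_indicator_iff measurableSet_Ici).2 h1).comp_neg
  rw [← heq] at h2
  exact (integrable_indicator_iff measurableSet_Iic).1 h2

private lemma key_value_neg {r : ℝ} (hr : 0 < r) :
    ∫ t in Set.Iic (0:ℝ), t ^ 2 * Real.exp (r * t) = 2 / r ^ 3 := by
  have := integral_comp_neg_Ioi (0:ℝ)
    (fun t : ℝ => t ^ 2 * Real.exp (r * t))
  simp only [neg_zero] at this
  rw [← this]
  rw [← key_value hr]
  refine setIntegral_congr_fun measurableSet_Ioi (fun t _ => ?_)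
  show (-t) ^ 2 * Real.exp (r * -t) = t ^ 2 * Real.exp (-(r * t))
  ring_nf

/-- Second moment bound for the density proportional to e^{au}/(1+e^u)^{a+b}. -/
theorem second_moment_bound (a b : ℝ) (ha : 0 < a) (hb : 0 < b)
    (f : ℝ → ℝ)
    (hf : ∀ u, f u = Real.Gamma (a + b) / (Real.Gamma a * Real.Gamma b) *
      (Real.exp (a * u) / (1 + Real.exp u) ^ (a + b))) :
    ∫ u : ℝ, u ^ 2 * f u ≤
      Real.Gamma (a + b) / (Real.Gamma a * Real.Gamma b) * (2 / a ^ 3 + 2 / b ^ 3) := by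
  set C : ℝ := Real.Gamma (a + b) / (Real.Gamma a * Real.Gamma b) with hC
  have hCpos : 0 < C := by
    apply div_pos (Real.Gamma_pos_of_pos (by linarith))
    exact mul_pos (Real.Gamma_pos_of_pos ha) (Real.Gamma_pos_of_pos hb)
  -- nonnegativity of the integrand
  have hpos : ∀ u, 0 ≤ u ^ 2 * f u := by
    intro u
    rw [hf]
    have h1 : (0:ℝ) < 1 + Real.exp u := by positivity
    positivity
  -- pointwise bounds
  have hbound_pos : ∀ u : ℝ, 0 ≤ u →
      u ^ 2 * f u ≤ C * (u ^ 2 * Real.exp (-(b * u))) := by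
    intro u hu
    rw [hf]
    have h1 : Real.exp u ^ (a + b) ≤ (1 + Real.exp u) ^ (a + b) :=
      Real.rpow_le_rpow (Real.exp_pos u).le (by linarith) (by linarith)
    have h2 : Real.exp u ^ (a + b) = Real.exp (u * (a + b)) := (Real.exp_mul u (a+b)).symm
    have h3 : Real.exp (a * u) / (1 + Real.exp u) ^ (a + b) ≤ Real.exp (-(b * u)) := by
      have h4 : Real.exp (a * u) / (1 + Real.exp u) ^ (a + b) ≤
          Real.exp (a * u) / Real.exp (u * (a + b)) := by
        rw [← h2]
        gcongr
      calc Real.exp (a * u) / (1 + Real.exp u) ^ (a + b)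
          ≤ Real.exp (a * u) / Real.exp (u * (a + b)) := h4
        _ = Real.exp (-(b * u)) := by rw [← Real.exp_sub]; congr 1; ring
    calc u ^ 2 * (C * (Real.exp (a * u) / (1 + Real.exp u) ^ (a + b)))
        ≤ u ^ 2 * (C * Real.exp (-(b * u))) := by
          have := mul_le_mul_of_nonneg_left h3 hCpos.le
          exact mul_le_mul_of_nonneg_left this (by positivity)
      _ = C * (u ^ 2 * Real.exp (-(b * u))) := by ring
  have hbound_neg : ∀ u : ℝ, u ≤ 0 →
      u ^ 2 * f u ≤ C * (u ^ 2 * Real.exp (a * u)) := by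
    intro u hu
    rw [hf]
    have h1 : (1:ℝ) ≤ (1 + Real.exp u) ^ (a + b) :=
      Real.one_le_rpow (by linarith [Real.exp_pos u]) (by linarith)
    have h3 : Real.exp (a * u) / (1 + Real.exp u) ^ (a + b) ≤ Real.exp (a * u) := by
      rw [div_le_iff₀ (by positivity)]
      nlinarith [Real.exp_pos (a * u)]
    calc u ^ 2 * (C * (Real.exp (a * u) / (1 + Real.exp u) ^ (a + b)))
        ≤ u ^ 2 * (C * Real.exp (a * u)) := by
          have := mul_le_mul_of_nonneg_left h3 hCpos.le
          exact mul_le_mul_of_nonneg_left this (by positivity)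
      _ = C * (u ^ 2 * Real.exp (a * u)) := by ring
  -- continuity / measurability
  have hcont : Continuous fun u : ℝ => u ^ 2 * f u := by
    have hfe : f = fun u => C * (Real.exp (a * u) / (1 + Real.exp u) ^ (a + b)) :=
      funext hf
    rw [hfe]
    have hden : Continuous fun u : ℝ => (1 + Real.exp u) ^ (a + b) :=
      (continuous_const.add Real.continuous_exp).rpow_const
        (fun x => Or.inl (by show (1:ℝ) + Real.exp x ≠ 0; positivity))
    exact (continuous_pow 2).mul (continuous_const.mul
      (((Real.continuous_exp.comp (continuous_const.mul continuous_id)).div hden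
        (fun x => by positivity))))
  -- integrability on Ioi 0
  have hIoiInt : IntegrableOn (fun u : ℝ => u ^ 2 * f u) (Set.Ioi 0) := by
    refine Integrable.mono' ((key_integrable hb).const_mul C)
      hcont.aestronglyMeasurable.restrict ?_
    refine (ae_restrict_iff' measurableSet_Ioi).2 (ae_of_all _ fun u hu => ?_)
    rw [Real.norm_eq_abs, abs_of_nonneg (hpos u)]
    exact hbound_pos u (le_of_lt hu)
  -- integrability on Iic 0
  have hIicInt : IntegrableOn (fun u : ℝ => u ^ 2 * f u) (Set.Iic 0) := by
    refine Integrable.mono' ((key_integrable_neg ha).const_mul C)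
      hcont.aestronglyMeasurable.restrict ?_
    refine (ae_restrict_iff' measurableSet_Iic).2 (ae_of_all _ fun u hu => ?_)
    rw [Real.norm_eq_abs, abs_of_nonneg (hpos u)]
    exact hbound_neg u hu
  -- bound each set integral
  have hIoi : ∫ u in Set.Ioi (0:ℝ), u ^ 2 * f u ≤ C * (2 / b ^ 3) := by
    have h1 : ∫ u in Set.Ioi (0:ℝ), u ^ 2 * f u ≤
        ∫ u in Set.Ioi (0:ℝ), C * (u ^ 2 * Real.exp (-(b * u))) := by
      refine setIntegral_mono_on hIoiInt ((key_integrable hb).const_mul C)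
        measurableSet_Ioi (fun u hu => hbound_pos u (le_of_lt hu))
    rw [integral_const_mul, key_value hb] at h1
    exact h1
  have hIic : ∫ u in Set.Iic (0:ℝ), u ^ 2 * f u ≤ C * (2 / a ^ 3) := by
    have h1 : ∫ u in Set.Iic (0:ℝ), u ^ 2 * f u ≤
        ∫ u in Set.Iic (0:ℝ), C * (u ^ 2 * Real.exp (a * u)) := by
      refine setIntegral_mono_on hIicInt ((key_integrable_neg ha).const_mul C)
        measurableSet_Iic (fun u hu => hbound_neg u hu)
    rw [integral_const_mul, key_value_neg ha] at h1
    exact h1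
  have hsplit := intervalIntegral.integral_Iic_add_Ioi hIicInt hIoiInt
  calc ∫ u : ℝ, u ^ 2 * f u
      = (∫ u in Set.Iic (0:ℝ), u ^ 2 * f u) + ∫ u in Set.Ioi (0:ℝ), u ^ 2 * f u :=
        hsplit.symm
    _ ≤ C * (2 / a ^ 3) + C * (2 / b ^ 3) := add_le_add hIic hIoi
    _ = C * (2 / a ^ 3 + 2 / b ^ 3) := by ring
end
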